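/- Let 0 < δ < 1/4 and let (x_n)_{n∈ℕ} be a δ-pseudo orbit of T. For each n ∈ ℕ let j_n be the smallest positive integer with T(x_n) ∈ [j_n − 1, j_n]. Then for every y ∈ ⋂_{k=0}^∞ T^{−k}([j_k − 1, j_k]) one has |T^k(y) − T(x_k)| ≤ 20δ for all k ∈ ℕ. -/

import Mathlib

open Set Filter
open Topology

noncomputable section

/-- `ell n = min {k ∈ ℤ⁺ : n ≤ 4^k}`. -/
def ell (n : ℕ) : ℕ := sInf {k : ℕ | 1 ≤ k ∧ n ≤ 4 ^ k}

/-- The value of the map `T` at the nonnegative integer `n`: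
`0` if `n` is even and `4 ^ ℓ(n) + 1` if `n` is odd. -/
def Tval (n : ℕ) : ℝ := if Even n then 0 else 4 ^ ell n + 1

/-- `T : [0,∞) → [0,∞)` is the unique continuous map which is affine on each
integer interval `[n-1, n]` and takes the value `Tval n` at every nonnegative
integer `n`.  This is expressed by linear interpolation on each `[n, n+1]`. -/
def IsT (T : ℝ → ℝ) : Prop :=
  ∀ n : ℕ, ∀ x ∈ Set.Icc (n : ℝ) (n + 1),
    T x = ((n : ℝ) + 1 - x) * Tval n + (x - (n : ℝ)) * Tval (n + 1)

/-- `(x_k)` is a `δ`-pseudo orbit of `T` in `[0,∞)`. -/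
def IsPseudoOrbit (T : ℝ → ℝ) (δ : ℝ) (x : ℕ → ℝ) : Prop :=
  (∀ k, 0 ≤ x k) ∧ ∀ k, |x (k + 1) - T (x k)| < δ

lemma ell_mem (n : ℕ) : 1 ≤ ell n ∧ n ≤ 4 ^ ell n := by
  have h : (max 1 n) ∈ {k : ℕ | 1 ≤ k ∧ n ≤ 4 ^ k} := by
    refine ⟨le_max_left _ _, ?_⟩
    calc n ≤ 4 ^ n := (Nat.lt_pow_self (by norm_num : 1 < 4) : n < 4 ^ n).le
    _ ≤ 4 ^ max 1 n := Nat.pow_le_pow_right (by norm_num) (le_max_right _ _)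
  exact Nat.sInf_mem ⟨_, h⟩

lemma ell_le {n k : ℕ} (h1 : 1 ≤ k) (h2 : n ≤ 4 ^ k) : ell n ≤ k := Nat.sInf_le ⟨h1, h2⟩

lemma ell_mono {m n : ℕ} (h : m ≤ n) : ell m ≤ ell n :=
  ell_le (ell_mem n).1 (h.trans (ell_mem n).2)

lemma ell_add_two (n : ℕ) : ell (n + 2) ≤ ell n + 1 := by
  apply ell_le (by omega)
  have h1 : n ≤ 4 ^ ell n := (ell_mem n).2
  have h2 : 4 ≤ 4 ^ ell n := by
    calc 4 = 4 ^ 1 := rfl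
    _ ≤ 4 ^ ell n := Nat.pow_le_pow_right (by norm_num) (ell_mem n).1
  calc n + 2 ≤ 4 ^ ell n + 4 ^ ell n + 4 ^ ell n + 4 ^ ell n := by omega
  _ = 4 ^ (ell n + 1) := by ring

lemma Tval_even {n : ℕ} (h : Even n) : Tval n = 0 := if_pos h

lemma Tval_odd {n : ℕ} (h : Odd n) : Tval n = 4 ^ ell n + 1 :=
  if_neg (Nat.not_even_iff_odd.mpr h)

lemma four_le_pow (n : ℕ) : (4:ℝ) ≤ 4 ^ ell n := by
  calc (4:ℝ) = 4 ^ 1 := by norm_num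
  _ ≤ 4 ^ ell n := pow_le_pow_right₀ (by norm_num) (ell_mem n).1

lemma Tval_odd_ge {n : ℕ} (h : Odd n) : (5:ℝ) ≤ Tval n := by
  rw [Tval_odd h]; linarith [four_le_pow n]

lemma Tval_nonneg (n : ℕ) : 0 ≤ Tval n := by
  rcases Nat.even_or_odd n with h | h
  · rw [Tval_even h]
  · linarith [Tval_odd_ge h]

lemma Tval_add_two_le {n : ℕ} (hn : Odd n) : Tval (n + 2) ≤ 4 * Tval n := by
  have hodd : Odd (n + 2) := by obtain ⟨r, hr⟩ := hn; exact ⟨r + 1, by omega⟩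
  rw [Tval_odd hn, Tval_odd hodd]
  have h1 : (4:ℝ) ^ ell (n + 2) ≤ 4 ^ (ell n + 1) :=
    pow_le_pow_right₀ (by norm_num) (ell_add_two n)
  rw [pow_succ] at h1
  nlinarith [four_le_pow n]

lemma Tval_le_of_le {m n : ℕ} (hm : Odd m) (hn : Odd n) (h : m ≤ n) : Tval m ≤ Tval n := by
  rw [Tval_odd hm, Tval_odd hn]
  have := pow_le_pow_right₀ (by norm_num : (1:ℝ) ≤ 4) (ell_mono h)
  linarith

lemma even_add_two' {n : ℕ} (h : Even n) : Even (n + 2) := by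
  obtain ⟨r, hr⟩ := h; exact ⟨r + 1, by omega⟩

lemma key {T : ℝ → ℝ} (hT : IsT T) {δ : ℝ} (hδ0 : 0 < δ) (hδ : δ < 1/4)
    (i : ℕ) {a t b : ℝ} (ha : a ∈ Set.Icc ((i:ℝ)) ((i:ℝ)+1))
    (ht : t ∈ Set.Icc ((i:ℝ)) ((i:ℝ)+1))
    (hb0 : 0 ≤ b) (hbt : |b - t| < δ) :
    5 * |a - b| ≤ |T a - T b| + 25 * δ := by
  obtain ⟨ha1, ha2⟩ := ha
  obtain ⟨ht1, ht2⟩ := ht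
  obtain ⟨hbt1, hbt2⟩ := abs_lt.mp hbt
  have hD : 0 ≤ |T a - T b| := abs_nonneg _
  rcases le_or_gt b ((i:ℝ)+1) with hbu | hbu
  · rcases le_or_gt (i:ℝ) b with hbl | hbl
    · -- b in the same lap [i, i+1]
      have hsub : T a - T b = (Tval (i+1) - Tval i) * (a - b) := by
        rw [hT i a ⟨ha1, ha2⟩, hT i b ⟨hbl, hbu⟩]; push_cast; ring
      have hS : (5:ℝ) ≤ |Tval (i+1) - Tval i| := by
        rcases Nat.even_or_odd i with he | ho
        · rw [Tval_even he, sub_zero,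
            abs_of_nonneg (by linarith [Tval_odd_ge he.add_one])]
          exact Tval_odd_ge he.add_one
        · rw [Tval_even ho.add_one, zero_sub, abs_neg,
            abs_of_nonneg (Tval_nonneg i)]
          exact Tval_odd_ge ho
      have heq : |T a - T b| = |Tval (i+1) - Tval i| * |a - b| := by
        rw [hsub, abs_mul]
      have := mul_le_mul_of_nonneg_right hS (abs_nonneg (a - b))
      linarith
    · -- b < i : b in the previous lap
      have hipos : 0 < i := by
        have : (0:ℝ) < (i:ℝ) := lt_of_le_of_lt hb0 hbl
        exact_mod_cast this
      obtain ⟨i', rfl⟩ : ∃ i', i = i' + 1 := ⟨i - 1, by omega⟩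
      push_cast at ha1 ha2 ht1 ht2 hbl
      have hb2 : b ∈ Set.Icc ((i':ℝ)) ((i':ℝ)+1) := ⟨by linarith, by linarith⟩
      have hv : ((i':ℝ)+1) - b < δ := by linarith
      have hv0 : 0 ≤ ((i':ℝ)+1) - b := by linarith
      have hu : 0 ≤ a - ((i':ℝ)+1) := by linarith
      have habs : |a - b| = (a - ((i':ℝ)+1)) + (((i':ℝ)+1) - b) := by
        rw [abs_of_nonneg (by linarith)]; ring
      have ea := hT (i'+1) a (by push_cast; exact ⟨by linarith, by linarith⟩)
      have eb := hT i' b hb2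
      push_cast at ea eb
      rcases Nat.even_or_odd i' with he | ho
      · -- i' even, i = i'+1 odd : equal slopes on both sides of i
        set M := Tval (i'+1) with hM
        have hM5 : (5:ℝ) ≤ M := Tval_odd_ge he.add_one
        rw [Tval_even he] at eb
        rw [Tval_even (even_add_two' he)] at ea
        have ea' : T a = ((i':ℝ) + 2 - a) * M := by rw [ea]; ring
        have eb' : T b = (b - (i':ℝ)) * M := by rw [eb]; ring
        have h1 : M * ((a - ((i':ℝ)+1)) - (((i':ℝ)+1) - b)) ≤ |T a - T b| := by
          have hd : M * ((a - ((i':ℝ)+1)) - (((i':ℝ)+1) - b)) = -(T a - T b) := by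
            rw [ea', eb']; ring
          rw [hd]; exact neg_le_abs _
        rw [habs]
        rcases le_or_gt (a - ((i':ℝ)+1)) (((i':ℝ)+1) - b) with h | h
        · linarith
        · have h2 := mul_le_mul_of_nonneg_right hM5
            (by linarith : (0:ℝ) ≤ (a - ((i':ℝ)+1)) - (((i':ℝ)+1) - b))
          linarith
      · -- i' odd, i = i'+1 even
        set M := Tval (i'+2) with hM
        set M3 := Tval i' with hM3
        have hM5 : (5:ℝ) ≤ M := Tval_odd_ge (by obtain ⟨r, hr⟩ := ho; exact ⟨r+1, by omega⟩)
        have hM3M : M3 ≤ M := Tval_le_of_le ho (by obtain ⟨r, hr⟩ := ho; exact ⟨r+1, by omega⟩) (by omega)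
        have hM30 : 0 ≤ M3 := Tval_nonneg _
        rw [Tval_even ho.add_one] at ea eb
        have ea' : T a = (a - ((i':ℝ)+1)) * M := by rw [ea]; push_cast; ring
        have eb' : T b = (((i':ℝ)+1) - b) * M3 := by rw [eb]; ring
        have h1 : T a - T b ≤ |T a - T b| := le_abs_self _
        have h2 : (((i':ℝ)+1) - b) * M3 ≤ δ * M := by
          calc (((i':ℝ)+1) - b) * M3 ≤ δ * M3 :=
                mul_le_mul_of_nonneg_right hv.le hM30
          _ ≤ δ * M := mul_le_mul_of_nonneg_left hM3M hδ0.le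
        have hd : T a - T b = (a - ((i':ℝ)+1)) * M - (((i':ℝ)+1) - b) * M3 := by
          rw [ea', eb']
        have h3 : M * (a - ((i':ℝ)+1)) ≤ |T a - T b| + δ * M := by linarith
        have h5d : 5 * |T a - T b| ≤ M * |T a - T b| :=
          mul_le_mul_of_nonneg_right hM5 hD
        have h4 : M * (5 * (a - ((i':ℝ)+1))) ≤ M * (|T a - T b| + 5 * δ) := by
          have e1 : M * (5 * (a - ((i':ℝ)+1))) = 5 * (M * (a - ((i':ℝ)+1))) := by ring
          have e2 : M * (|T a - T b| + 5 * δ) = M * |T a - T b| + 5 * (δ * M) := by ring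
          rw [e1, e2]; linarith
        have h5 : 5 * (a - ((i':ℝ)+1)) ≤ |T a - T b| + 5 * δ :=
          le_of_mul_le_mul_left h4 (by linarith)
        rw [habs]; linarith
  · -- i + 1 < b : b in the next lap
    push_cast at *
    have hb2 : b ∈ Set.Icc (((i:ℝ)+1)) (((i:ℝ)+1)+1) := ⟨by linarith, by linarith⟩
    have hv : b - ((i:ℝ)+1) < δ := by linarith
    have hv0 : 0 ≤ b - ((i:ℝ)+1) := by linarith
    have hu : 0 ≤ ((i:ℝ)+1) - a := by linarith
    have habs : |a - b| = (b - ((i:ℝ)+1)) + (((i:ℝ)+1) - a) := by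
      rw [abs_sub_comm, abs_of_nonneg (by linarith)]; ring
    have ea := hT i a ⟨ha1, ha2⟩
    have eb := hT (i+1) b (by push_cast; exact ⟨by linarith, by linarith⟩)
    push_cast at ea eb
    rcases Nat.even_or_odd i with he | ho
    · -- i even, i+1 odd : equal slopes on both sides of i+1
      set M := Tval (i+1) with hM
      have hM5 : (5:ℝ) ≤ M := Tval_odd_ge he.add_one
      rw [Tval_even he] at ea
      rw [Tval_even (even_add_two' he)] at eb
      have ea' : T a = (a - (i:ℝ)) * M := by rw [ea]; ring
      have eb' : T b = ((i:ℝ) + 2 - b) * M := by rw [eb]; ring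
      have h1 : M * ((((i:ℝ)+1) - a) - (b - ((i:ℝ)+1))) ≤ |T a - T b| := by
        have hd : M * ((((i:ℝ)+1) - a) - (b - ((i:ℝ)+1))) = -(T a - T b) := by
          rw [ea', eb']; ring
        rw [hd]; exact neg_le_abs _
      rw [habs]
      rcases le_or_gt (((i:ℝ)+1) - a) (b - ((i:ℝ)+1)) with h | h
      · linarith
      · have h2 := mul_le_mul_of_nonneg_right hM5
          (by linarith : (0:ℝ) ≤ (((i:ℝ)+1) - a) - (b - ((i:ℝ)+1)))
        linarith
    · -- i odd, i+1 even : slope ratio at most 4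
      set M1 := Tval i with hM1
      set M2 := Tval (i+2) with hM2
      have hM15 : (5:ℝ) ≤ M1 := Tval_odd_ge ho
      have hM20 : 0 ≤ M2 := Tval_nonneg _
      have hM21 : M2 ≤ 4 * M1 := Tval_add_two_le ho
      rw [Tval_even ho.add_one] at ea eb
      have ea' : T a = (((i:ℝ)+1) - a) * M1 := by rw [ea]; ring
      have eb' : T b = (b - ((i:ℝ)+1)) * M2 := by rw [eb]; push_cast; ring
      have h1 : T a - T b ≤ |T a - T b| := le_abs_self _
      have h2 : (b - ((i:ℝ)+1)) * M2 ≤ δ * (4 * M1) := by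
        calc (b - ((i:ℝ)+1)) * M2 ≤ δ * M2 :=
              mul_le_mul_of_nonneg_right hv.le hM20
        _ ≤ δ * (4 * M1) := mul_le_mul_of_nonneg_left hM21 hδ0.le
      have hd : T a - T b = (((i:ℝ)+1) - a) * M1 - (b - ((i:ℝ)+1)) * M2 := by
        rw [ea', eb']
      have h3 : M1 * (((i:ℝ)+1) - a) ≤ |T a - T b| + δ * (4 * M1) := by linarith
      have h5d : 5 * |T a - T b| ≤ M1 * |T a - T b| :=
        mul_le_mul_of_nonneg_right hM15 hD
      have h4 : M1 * (5 * (((i:ℝ)+1) - a)) ≤ M1 * (|T a - T b| + 20 * δ) := by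
        have e1 : M1 * (5 * (((i:ℝ)+1) - a)) = 5 * (M1 * (((i:ℝ)+1) - a)) := by ring
        have e2 : M1 * (|T a - T b| + 20 * δ) = M1 * |T a - T b| + 5 * (δ * (4 * M1)) := by
          ring
        rw [e1, e2]; linarith
      have h5 : 5 * (((i:ℝ)+1) - a) ≤ |T a - T b| + 20 * δ :=
        le_of_mul_le_mul_left h4 (by linarith)
      rw [habs]; linarith

/-- If `0 < δ < 1/4`, `(x n)` is a `δ`-pseudo orbit and `j n` is the smallest
positive integer with `T (x n) ∈ [j n - 1, j n]`, then every point `y` of the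
cylinder `⋂ k, T^[k] ⁻¹' [j k - 1, j k]` satisfies
`|T^[k] y - T (x k)| ≤ 20 δ` for all `k`. -/
theorem orbit_20delta_shadows (T : ℝ → ℝ) (hT : IsT T) (δ : ℝ)
    (hδ0 : 0 < δ) (hδ : δ < 1 / 4) (x : ℕ → ℝ) (hx : IsPseudoOrbit T δ x)
    (j : ℕ → ℕ)
    (hj : ∀ n : ℕ, 1 ≤ j n ∧ T (x n) ∈ Set.Icc ((j n : ℝ) - 1) (j n) ∧
      ∀ m : ℕ, 1 ≤ m → T (x n) ∈ Set.Icc ((m : ℝ) - 1) m → j n ≤ m)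
    (y : ℝ) (hy : y ∈ ⋂ k : ℕ, T^[k] ⁻¹' Set.Icc ((j k : ℝ) - 1) (j k)) :
    ∀ k : ℕ, |T^[k] y - T (x k)| ≤ 20 * δ := by
  simp only [Set.mem_iInter, Set.mem_preimage] at hy
  have step : ∀ k, 5 * |T^[k] y - T (x k)| ≤ |T^[k+1] y - T (x (k+1))| + 30 * δ := by
    intro k
    obtain ⟨hj1, hj2, -⟩ := hj k
    obtain ⟨i, hi⟩ : ∃ i, j k = i + 1 := ⟨j k - 1, by omega⟩
    have hIcc : ∀ z : ℝ, z ∈ Set.Icc ((j k : ℝ) - 1) (j k) →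
        z ∈ Set.Icc ((i:ℝ)) ((i:ℝ)+1) := by
      intro z hz
      rw [hi] at hz
      push_cast at hz
      exact ⟨by linarith [hz.1], by linarith [hz.2]⟩
    have hkey := key hT hδ0 hδ i (hIcc _ (hy k)) (hIcc _ hj2) (hx.1 (k+1)) (hx.2 k)
    rw [show T (T^[k] y) = T^[k+1] y from (Function.iterate_succ_apply' T k y).symm] at hkey
    have h2 : |T^[k] y - T (x k)| ≤ |T^[k] y - x (k+1)| + |x (k+1) - T (x k)| :=
      abs_sub_le _ _ _
    linarith [hx.2 k]
  have bound1 : ∀ k, |T^[k] y - T (x k)| ≤ 1 := by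
    intro k
    have h1 := hy k
    have h2 := (hj k).2.1
    rw [abs_sub_le_iff]
    exact ⟨by linarith [h1.2, h2.1], by linarith [h1.1, h2.2]⟩
  have H : ∀ m k, |T^[k] y - T (x k)| ≤ (1/5:ℝ)^m + (15/2) * δ := by
    intro m
    induction m with
    | zero => intro k; simpa using by linarith [bound1 k, hδ0.le]
    | succ m ih =>
      intro k
      have h1 := step k
      have h2 := ih (k+1)
      rw [pow_succ]
      linarith
  intro k
  have hlim : Tendsto (fun m : ℕ => (1/5:ℝ)^m + (15/2) * δ) atTop (𝓝 (0 + (15/2) * δ)) :=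
    (tendsto_pow_atTop_nhds_zero_of_lt_one (by norm_num) (by norm_num)).add tendsto_const_nhds
  have hfin := ge_of_tendsto' hlim (fun m => H m k)
  linarith
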